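/- For r, s ≥ 1, the number of spanning trees of the complete bipartite graph K_{r,s} equals r^(s−1) · s^(r−1). -/

import Mathlib

/-- The complete bipartite graph on `Fin r ⊕ Fin s`: two vertices are adjacent
iff they lie in different parts. -/
def completeBipartite (r s : ℕ) : SimpleGraph (Fin r ⊕ Fin s) :=
  SimpleGraph.fromRel (fun x y => x.isLeft ≠ y.isLeft)

namespace BipTree

variable {V : Type*} [LinearOrder V]

def Reaches (ρ : V) (p : V → V) (v : V) : Prop := ∃ n, p^[n] v = ρ

open Classical in
noncomputable def ht (ρ : V) (p : V → V) (v : V) : ℕ :=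
  if h : Reaches ρ p v then Nat.find h else 0

lemma eq_root_of_ht_eq_zero {ρ : V} {p : V → V} {v : V} (h : Reaches ρ p v)
    (h0 : ht ρ p v = 0) : v = ρ := by
  classical
  rw [ht, dif_pos h] at h0
  have h1 := Nat.find_spec h
  rw [h0] at h1
  simpa using h1

lemma reaches_step {ρ : V} {p : V → V} {v : V} (h : Reaches ρ p v) (hv : v ≠ ρ) :
    Reaches ρ p (p v) ∧ ht ρ p v = ht ρ p (p v) + 1 := by
  classical
  have hk : p^[ht ρ p v] v = ρ := by
    rw [ht, dif_pos h]; exact Nat.find_spec h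
  have hk0 : ht ρ p v ≠ 0 := fun h0 => hv (eq_root_of_ht_eq_zero h h0)
  obtain ⟨m, hm⟩ := Nat.exists_eq_succ_of_ne_zero hk0
  have hm' : p^[m] (p v) = ρ := by
    rw [← Function.iterate_succ_apply, ← hm]; exact hk
  have hre : Reaches ρ p (p v) := ⟨m, hm'⟩
  refine ⟨hre, ?_⟩
  have h1 : ht ρ p (p v) ≤ m := by
    rw [ht, dif_pos hre]; exact Nat.find_le hm'
  have h2 : ht ρ p v ≤ ht ρ p (p v) + 1 := by
    have hh : p^[ht ρ p (p v) + 1] v = ρ := by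
      rw [Function.iterate_succ_apply]
      rw [ht, dif_pos hre]; exact Nat.find_spec hre
    rw [ht, dif_pos h]; exact Nat.find_le hh
  omega

lemma ht_lt {ρ : V} {p : V → V} {v : V} (h : Reaches ρ p v) (hv : v ≠ ρ) :
    ht ρ p (p v) < ht ρ p v := by
  have := (reaches_step h hv).2; omega

lemma ht_root {ρ : V} {p : V → V} : ht ρ p ρ = 0 := by
  classical
  rw [ht]
  split
  · exact Nat.le_zero.1 (Nat.find_le (show p^[0] ρ = ρ from rfl))
  · rfl

def IsPM (side : V → Bool) (ρ : V) (S : Finset V) (p : V → V) : Prop :=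
  (∀ v ∈ S.erase ρ, p v ∈ S ∧ side (p v) ≠ side v) ∧
  (∀ v, v ∉ S.erase ρ → p v = v) ∧
  (∀ v ∈ S, Reaches ρ p v)

def leaves (ρ : V) (S : Finset V) (p : V → V) : Finset V :=
  (S.erase ρ).filter (fun v => ∀ w ∈ S.erase ρ, p w ≠ v)

def dleaves (side : V → Bool) (ρ : V) (S : Finset V) (α β : List V) : Finset V :=
  (S.erase ρ).filter (fun v => v ∉ (if side v = side ρ then α else β))

variable {side : V → Bool} {ρ : V}

lemma leaves_subset {S : Finset V} {p : V → V} : leaves ρ S p ⊆ S.erase ρ :=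
  Finset.filter_subset _ _

lemma mem_leaves {S : Finset V} {p : V → V} {v : V} :
    v ∈ leaves ρ S p ↔ v ∈ S.erase ρ ∧ ∀ w ∈ S.erase ρ, p w ≠ v := by
  simp [leaves]

lemma mem_dleaves {S : Finset V} {α β : List V} {v : V} :
    v ∈ dleaves side ρ S α β ↔
      v ∈ S.erase ρ ∧ v ∉ (if side v = side ρ then α else β) := by
  simp [dleaves]

lemma leaves_nonempty {S : Finset V} {p : V → V} (pm : IsPM side ρ S p)
    (hS : (S.erase ρ).Nonempty) : (leaves ρ S p).Nonempty := by
  obtain ⟨v, hv, hmax⟩ := Finset.exists_max_image (S.erase ρ) (fun v => ht ρ p v) hS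
  refine ⟨v, mem_leaves.2 ⟨hv, fun w hw hpw => ?_⟩⟩
  have hwρ : w ≠ ρ := (Finset.mem_erase.1 hw).1
  have hre : Reaches ρ p w := pm.2.2 w (Finset.mem_erase.1 hw).2
  have h1 := ht_lt hre hwρ
  have h2 := hmax w hw
  rw [hpw] at h1
  omega

lemma iterate_mem {S : Finset V} {p : V → V} (pm : IsPM side ρ S p)
    {v : V} (hv : v ∈ S) (k : ℕ) : p^[k] v ∈ S := by
  induction k with
  | zero => simpa using hv
  | succ k ih =>
    rw [Function.iterate_succ_apply']
    by_cases h : p^[k] v ∈ S.erase ρ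
    · exact (pm.1 _ h).1
    · rw [pm.2.1 _ h]; exact ih

lemma iterate_update {S : Finset V} {p : V → V} (pm : IsPM side ρ S p)
    {ℓ n : V} (hℓ : ℓ ∉ S) {v : V} (hv : v ∈ S) (k : ℕ) :
    (Function.update p ℓ n)^[k] v = p^[k] v := by
  induction k with
  | zero => rfl
  | succ k ih =>
    rw [Function.iterate_succ_apply', Function.iterate_succ_apply', ih,
      Function.update_of_ne (fun h => hℓ (by rw [← h]; exact iterate_mem pm hv k)) _ _]

lemma pm_erase {S : Finset V} {p : V → V} (pm : IsPM side ρ S p)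
    {ℓ : V} (hℓ : ℓ ∈ leaves ρ S p) :
    IsPM side ρ (S.erase ℓ) (Function.update p ℓ ℓ) := by
  obtain ⟨hℓe, hlf⟩ := mem_leaves.1 hℓ
  have hℓρ : ℓ ≠ ρ := (Finset.mem_erase.1 hℓe).1
  have hℓS : ℓ ∈ S := (Finset.mem_erase.1 hℓe).2
  have hkey : ∀ v ∈ S.erase ℓ, ∀ k,
      (Function.update p ℓ ℓ)^[k] v = p^[k] v ∧ p^[k] v ∈ S.erase ℓ := by
    intro v hv k
    induction k with
    | zero => exact ⟨rfl, hv⟩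
    | succ k ih =>
      obtain ⟨ih1, ih2⟩ := ih
      have h1 : p^[k+1] v ∈ S.erase ℓ := by
        rw [Function.iterate_succ_apply']
        by_cases h : p^[k] v ∈ S.erase ρ
        · exact Finset.mem_erase.2 ⟨hlf _ h, (pm.1 _ h).1⟩
        · rw [pm.2.1 _ h]; exact ih2
      refine ⟨?_, h1⟩
      rw [Function.iterate_succ_apply', Function.iterate_succ_apply', ih1,
        Function.update_of_ne (Finset.mem_erase.1 ih2).1 _ _]
  refine ⟨?_, ?_, ?_⟩
  · intro v hv
    rw [Finset.mem_erase] at hv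
    have hvρ : v ≠ ρ := hv.1
    have hvℓ : v ≠ ℓ := (Finset.mem_erase.1 hv.2).1
    have hvS : v ∈ S := (Finset.mem_erase.1 hv.2).2
    have hv' : v ∈ S.erase ρ := Finset.mem_erase.2 ⟨hvρ, hvS⟩
    rw [Function.update_of_ne hvℓ _ _]
    exact ⟨Finset.mem_erase.2 ⟨hlf _ hv', (pm.1 _ hv').1⟩, (pm.1 _ hv').2⟩
  · intro v hv
    by_cases hvℓ : v = ℓ
    · subst hvℓ; simp
    · rw [Function.update_of_ne hvℓ _ _]
      apply pm.2.1
      intro hmem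
      rw [Finset.mem_erase] at hmem
      exact hv (Finset.mem_erase.2 ⟨hmem.1, Finset.mem_erase.2 ⟨hvℓ, hmem.2⟩⟩)
  · intro v hv
    have hvS : v ∈ S := (Finset.mem_erase.1 hv).2
    obtain ⟨k, hk⟩ := pm.2.2 v hvS
    exact ⟨k, by rw [(hkey v hv k).1]; exact hk⟩

section Defs

variable (side : V → Bool) (ρ : V)

def encode (S : Finset V) (p : V → V) : List V × List V :=
  if h : (leaves ρ S p).Nonempty then
    have hmem : (leaves ρ S p).min' h ∈ S :=
      (Finset.mem_erase.1 (Finset.filter_subset _ _ (Finset.min'_mem _ h))).2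
    let ℓ := (leaves ρ S p).min' h
    let c := encode (S.erase ℓ) (Function.update p ℓ ℓ)
    if side ℓ = side ρ then (c.1, p ℓ :: c.2) else (p ℓ :: c.1, c.2)
  else ([], [])
termination_by S.card
decreasing_by exact Finset.card_erase_lt_of_mem hmem

def decode (S : Finset V) (α β : List V) : V → V :=
  if h : (dleaves side ρ S α β).Nonempty then
    have hmem : (dleaves side ρ S α β).min' h ∈ S :=
      (Finset.mem_erase.1 (Finset.filter_subset _ _ (Finset.min'_mem _ h))).2
    let ℓ := (dleaves side ρ S α β).min' h
    if side ℓ = side ρ then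
      Function.update (decode (S.erase ℓ) α β.tail) ℓ (β.head?.getD ℓ)
    else
      Function.update (decode (S.erase ℓ) α.tail β) ℓ (α.head?.getD ℓ)
  else id
termination_by S.card
decreasing_by all_goals exact Finset.card_erase_lt_of_mem hmem

def acnt (S : Finset V) : ℕ := (S.filter (fun v => side v = side ρ)).card
def bcnt (S : Finset V) : ℕ := (S.filter (fun v => side v ≠ side ρ)).card

def IsCode (S : Finset V) (c : List V × List V) : Prop :=
  (∀ x ∈ c.1, x ∈ S ∧ side x = side ρ) ∧
  (∀ x ∈ c.2, x ∈ S ∧ side x ≠ side ρ) ∧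
  c.1.length = bcnt side ρ S ∧
  c.2.length + 1 = acnt side ρ S ∧
  (c.1 = [] ∨ c.1.getLast? = some ρ)

end Defs


lemma encode_of_nonempty {S : Finset V} {p : V → V} (h : (leaves ρ S p).Nonempty) :
    encode side ρ S p =
      (if side ((leaves ρ S p).min' h) = side ρ then
        ((encode side ρ (S.erase ((leaves ρ S p).min' h))
            (Function.update p ((leaves ρ S p).min' h) ((leaves ρ S p).min' h))).1,
          p ((leaves ρ S p).min' h) ::
          (encode side ρ (S.erase ((leaves ρ S p).min' h))
            (Function.update p ((leaves ρ S p).min' h) ((leaves ρ S p).min' h))).2)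
      else
        (p ((leaves ρ S p).min' h) ::
          (encode side ρ (S.erase ((leaves ρ S p).min' h))
            (Function.update p ((leaves ρ S p).min' h) ((leaves ρ S p).min' h))).1,
          (encode side ρ (S.erase ((leaves ρ S p).min' h))
            (Function.update p ((leaves ρ S p).min' h) ((leaves ρ S p).min' h))).2)) := by
  rw [encode]; simp only [dif_pos h]

lemma encode_of_empty {S : Finset V} {p : V → V} (h : ¬ (leaves ρ S p).Nonempty) :
    encode side ρ S p = ([], []) := by
  rw [encode]; simp only [dif_neg h]

lemma decode_of_nonempty {S : Finset V} {α β : List V}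
    (h : (dleaves side ρ S α β).Nonempty) :
    decode side ρ S α β =
      (if side ((dleaves side ρ S α β).min' h) = side ρ then
        Function.update (decode side ρ (S.erase ((dleaves side ρ S α β).min' h)) α β.tail)
          ((dleaves side ρ S α β).min' h) (β.head?.getD ((dleaves side ρ S α β).min' h))
      else
        Function.update (decode side ρ (S.erase ((dleaves side ρ S α β).min' h)) α.tail β)
          ((dleaves side ρ S α β).min' h) (α.head?.getD ((dleaves side ρ S α β).min' h))) := by
  rw [decode]; simp only [dif_pos h]

lemma decode_of_empty {S : Finset V} {α β : List V}
    (h : ¬ (dleaves side ρ S α β).Nonempty) : decode side ρ S α β = id := by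
  rw [decode]; simp only [dif_neg h]

lemma bool_aux : ∀ a b c : Bool, a ≠ b → c ≠ a → c = b := by decide

lemma acnt_erase_same {S : Finset V} {ℓ : V} (hℓ : ℓ ∈ S) (hs : side ℓ = side ρ) :
    acnt side ρ (S.erase ℓ) + 1 = acnt side ρ S := by
  unfold acnt
  rw [Finset.filter_erase, Finset.card_erase_add_one (Finset.mem_filter.2 ⟨hℓ, hs⟩)]

lemma bcnt_erase_same {S : Finset V} {ℓ : V} (hs : side ℓ = side ρ) :
    bcnt side ρ (S.erase ℓ) = bcnt side ρ S := by
  unfold bcnt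
  rw [Finset.filter_erase, Finset.erase_eq_of_notMem]
  simp [hs]

lemma acnt_erase_opp {S : Finset V} {ℓ : V} (hs : ¬ side ℓ = side ρ) :
    acnt side ρ (S.erase ℓ) = acnt side ρ S := by
  unfold acnt
  rw [Finset.filter_erase, Finset.erase_eq_of_notMem]
  simp [hs]

lemma bcnt_erase_opp {S : Finset V} {ℓ : V} (hℓ : ℓ ∈ S) (hs : ¬ side ℓ = side ρ) :
    bcnt side ρ (S.erase ℓ) + 1 = bcnt side ρ S := by
  unfold bcnt
  rw [Finset.filter_erase, Finset.card_erase_add_one (Finset.mem_filter.2 ⟨hℓ, hs⟩)]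

lemma acnt_pos {S : Finset V} (hρ : ρ ∈ S) : 1 ≤ acnt side ρ S :=
  Finset.card_pos.2 ⟨ρ, Finset.mem_filter.2 ⟨hρ, rfl⟩⟩


lemma isCode_encode (S : Finset V) :
    ∀ p, ρ ∈ S → IsPM side ρ S p → IsCode side ρ S (encode side ρ S p) := by
  induction S using Finset.strongInduction with
  | _ S IH =>
    intro p hρ pm
    by_cases hne : (leaves ρ S p).Nonempty
    · rw [encode_of_nonempty hne]
      set ℓ := (leaves ρ S p).min' hne with hℓdef
      have hℓmem : ℓ ∈ leaves ρ S p := Finset.min'_mem _ hne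
      have hℓe : ℓ ∈ S.erase ρ := leaves_subset hℓmem
      have hℓρ : ℓ ≠ ρ := (Finset.mem_erase.1 hℓe).1
      have hℓS : ℓ ∈ S := (Finset.mem_erase.1 hℓe).2
      have hpℓ : p ℓ ∈ S ∧ side (p ℓ) ≠ side ℓ := pm.1 ℓ hℓe
      have pm' := pm_erase pm hℓmem
      have hρ' : ρ ∈ S.erase ℓ := Finset.mem_erase.2 ⟨Ne.symm hℓρ, hρ⟩
      obtain ⟨hc1, hc2, hlen1, hlen2, hlast⟩ :=
        IH (S.erase ℓ) (Finset.erase_ssubset hℓS) _ hρ' pm'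
      have hpℓℓ : p ℓ ≠ ℓ := fun e => hpℓ.2 (by rw [e])
      by_cases hs : side ℓ = side ρ
      · rw [if_pos hs]
        refine ⟨?_, ?_, ?_, ?_, hlast⟩
        · intro x hx
          obtain ⟨hxS, hxs⟩ := hc1 x hx
          exact ⟨(Finset.mem_erase.1 hxS).2, hxs⟩
        · intro x hx
          rcases List.mem_cons.1 hx with rfl | hx
          · exact ⟨hpℓ.1, fun e => hpℓ.2 (by rw [e, hs])⟩
          · obtain ⟨hxS, hxs⟩ := hc2 x hx
            exact ⟨(Finset.mem_erase.1 hxS).2, hxs⟩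
        · rw [hlen1, bcnt_erase_same hs]
        · have ha := acnt_erase_same (side := side) hℓS hs
          simp only [List.length_cons]
          omega
      · rw [if_neg hs]
        have hbc := bcnt_erase_opp (side := side) hℓS hs
        refine ⟨?_, ?_, ?_, ?_, ?_⟩
        · intro x hx
          rcases List.mem_cons.1 hx with rfl | hx
          · exact ⟨hpℓ.1, bool_aux (side ℓ) (side ρ) (side (p ℓ)) hs hpℓ.2⟩
          · obtain ⟨hxS, hxs⟩ := hc1 x hx
            exact ⟨(Finset.mem_erase.1 hxS).2, hxs⟩
        · intro x hx
          obtain ⟨hxS, hxs⟩ := hc2 x hx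
          exact ⟨(Finset.mem_erase.1 hxS).2, hxs⟩
        · simp only [List.length_cons]; omega
        · rw [hlen2, acnt_erase_opp hs]
        · right
          rcases hceq : (encode side ρ (S.erase ℓ) (Function.update p ℓ ℓ)).1 with _ | ⟨y, t⟩
          · -- c'.1 = [] : show p ℓ = ρ
            have hb0 : bcnt side ρ (S.erase ℓ) = 0 := by
              rw [← hlen1, hceq]; rfl
            have hall : ∀ w ∈ S.erase ℓ, side w = side ρ := by
              intro w hw
              by_contra hws
              have hmem : w ∈ (S.erase ℓ).filter (fun v => side v ≠ side ρ) :=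
                Finset.mem_filter.2 ⟨hw, hws⟩
              rw [Finset.card_eq_zero.1 hb0] at hmem
              exact Finset.notMem_empty w hmem
            have hmem2 : p ℓ ∈ S.erase ℓ := Finset.mem_erase.2 ⟨hpℓℓ, hpℓ.1⟩
            have hpρ : p ℓ = ρ := by
              by_contra hne2
              have hmem3 : p ℓ ∈ (S.erase ℓ).erase ρ := Finset.mem_erase.2 ⟨hne2, hmem2⟩
              have hq := pm'.1 _ hmem3
              exact hq.2 (by rw [hall _ hq.1, hall _ hmem2])
            simp [hpρ]
          · simp only [List.getLast?_cons_cons]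
            rcases hlast with h | h
            · rw [hceq] at h; cases h
            · rw [hceq] at h; exact h
    · have hSe : S.erase ρ = ∅ := by
        by_contra h
        exact hne (leaves_nonempty pm (Finset.nonempty_iff_ne_empty.2 h))
      have hSsing : S = {ρ} := by
        rcases (Finset.erase_eq_empty_iff S ρ).1 hSe with h | h
        · exact absurd (h ▸ hρ) (Finset.notMem_empty ρ)
        · exact h
      rw [encode_of_empty hne]
      refine ⟨by simp, by simp, ?_, ?_, Or.inl rfl⟩
      · simp [bcnt, hSsing, Finset.filter_singleton]
      · simp [acnt, hSsing, Finset.filter_singleton]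


lemma decode_eq_of {S : Finset V} {α β : List V}
    (h : (dleaves side ρ S α β).Nonempty) {ℓ : V}
    (hℓ : (dleaves side ρ S α β).min' h = ℓ) :
    decode side ρ S α β =
      (if side ℓ = side ρ then
        Function.update (decode side ρ (S.erase ℓ) α β.tail) ℓ (β.head?.getD ℓ)
      else
        Function.update (decode side ρ (S.erase ℓ) α.tail β) ℓ (α.head?.getD ℓ)) := by
  subst hℓ; exact decode_of_nonempty h

lemma isLf_iff_encode (S : Finset V) :
    ∀ p, ρ ∈ S → IsPM side ρ S p → ∀ v ∈ S.erase ρ,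
      ((∀ w ∈ S.erase ρ, p w ≠ v) ↔
        v ∉ (if side v = side ρ then (encode side ρ S p).1 else (encode side ρ S p).2)) := by
  induction S using Finset.strongInduction with
  | _ S IH =>
    intro p hρ pm v hv
    by_cases hne : (leaves ρ S p).Nonempty
    · rw [encode_of_nonempty hne]
      set ℓ := (leaves ρ S p).min' hne with hℓdef
      have hℓmem : ℓ ∈ leaves ρ S p := Finset.min'_mem _ hne
      have hℓe : ℓ ∈ S.erase ρ := leaves_subset hℓmem
      have hℓρ : ℓ ≠ ρ := (Finset.mem_erase.1 hℓe).1
      have hℓS : ℓ ∈ S := (Finset.mem_erase.1 hℓe).2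
      have hpℓ : p ℓ ∈ S ∧ side (p ℓ) ≠ side ℓ := pm.1 ℓ hℓe
      have pm' := pm_erase pm hℓmem
      have hρ' : ρ ∈ S.erase ℓ := Finset.mem_erase.2 ⟨Ne.symm hℓρ, hρ⟩
      obtain ⟨hc1, hc2, _, _, _⟩ := isCode_encode (S.erase ℓ) _ hρ' pm'
      by_cases hvℓ : v = ℓ
      · subst hvℓ
        have hLf : ∀ w ∈ S.erase ρ, p w ≠ ℓ := (mem_leaves.1 hℓmem).2
        refine iff_of_true hLf ?_
        by_cases hs : side ℓ = side ρ
        · rw [if_pos hs, if_pos hs]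
          intro hmem
          exact (Finset.mem_erase.1 (hc1 ℓ hmem).1).1 rfl
        · rw [if_neg hs, if_neg hs]
          intro hmem
          exact (Finset.mem_erase.1 (hc2 ℓ hmem).1).1 rfl
      · by_cases hvn : v = p ℓ
        · refine iff_of_false ?_ ?_
          · intro h
            exact h ℓ hℓe hvn.symm
          · by_cases hs : side ℓ = side ρ
            · have hsv : ¬ side v = side ρ := by
                rw [hvn]; intro h; exact hpℓ.2 (by rw [h, hs])
              rw [if_pos hs, if_neg hsv]
              simp [hvn]
            · have hsv : side v = side ρ :=
                hvn ▸ bool_aux (side ℓ) (side ρ) (side (p ℓ)) hs hpℓ.2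
              rw [if_neg hs, if_pos hsv]
              simp [hvn]
        · have hv' : v ∈ (S.erase ℓ).erase ρ :=
            Finset.mem_erase.2 ⟨(Finset.mem_erase.1 hv).1,
              Finset.mem_erase.2 ⟨hvℓ, (Finset.mem_erase.1 hv).2⟩⟩
          have hIH := IH (S.erase ℓ) (Finset.erase_ssubset hℓS) _ hρ' pm' v hv'
          have hA : (∀ w ∈ S.erase ρ, p w ≠ v) ↔
              (∀ w ∈ (S.erase ℓ).erase ρ, Function.update p ℓ ℓ w ≠ v) := by
            constructor
            · intro h w hw
              have hwℓ : w ≠ ℓ := (Finset.mem_erase.1 (Finset.mem_erase.1 hw).2).1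
              rw [Function.update_of_ne hwℓ _ _]
              exact h w (Finset.mem_erase.2 ⟨(Finset.mem_erase.1 hw).1,
                (Finset.mem_erase.1 (Finset.mem_erase.1 hw).2).2⟩)
            · intro h w hw
              by_cases hwℓ : w = ℓ
              · subst hwℓ; exact fun e => hvn e.symm
              · have hw' : w ∈ (S.erase ℓ).erase ρ :=
                  Finset.mem_erase.2 ⟨(Finset.mem_erase.1 hw).1,
                    Finset.mem_erase.2 ⟨hwℓ, (Finset.mem_erase.1 hw).2⟩⟩
                have := h w hw'
                rwa [Function.update_of_ne hwℓ _ _] at this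
          refine hA.trans (hIH.trans ?_)
          by_cases hs : side ℓ = side ρ <;> by_cases hsv : side v = side ρ <;>
            simp only [if_pos, if_neg, hs, hsv, if_true, if_false, List.mem_cons,
              not_or] <;> tauto
    · exfalso
      have hSe : S.erase ρ = ∅ := by
        by_contra h
        exact hne (leaves_nonempty pm (Finset.nonempty_iff_ne_empty.2 h))
      rw [hSe] at hv
      exact Finset.notMem_empty v hv

lemma decode_encode (S : Finset V) :
    ∀ p, ρ ∈ S → IsPM side ρ S p →
      decode side ρ S (encode side ρ S p).1 (encode side ρ S p).2 = p := by
  induction S using Finset.strongInduction with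
  | _ S IH =>
    intro p hρ pm
    by_cases hne : (leaves ρ S p).Nonempty
    · have hdl : dleaves side ρ S (encode side ρ S p).1 (encode side ρ S p).2
          = leaves ρ S p := by
        apply Finset.filter_congr
        intro x hx
        exact (isLf_iff_encode S p hρ pm x hx).symm
      have hne' : (dleaves side ρ S (encode side ρ S p).1 (encode side ρ S p).2).Nonempty := by
        rw [hdl]; exact hne
      have hmin : (dleaves side ρ S (encode side ρ S p).1 (encode side ρ S p).2).min' hne'
          = (leaves ρ S p).min' hne := by
        simp only [hdl]
      set ℓ := (leaves ρ S p).min' hne with hℓdef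
      have hℓmem : ℓ ∈ leaves ρ S p := Finset.min'_mem _ hne
      have hℓe : ℓ ∈ S.erase ρ := leaves_subset hℓmem
      have hℓρ : ℓ ≠ ρ := (Finset.mem_erase.1 hℓe).1
      have hℓS : ℓ ∈ S := (Finset.mem_erase.1 hℓe).2
      have pm' := pm_erase pm hℓmem
      have hρ' : ρ ∈ S.erase ℓ := Finset.mem_erase.2 ⟨Ne.symm hℓρ, hρ⟩
      have hIH := IH (S.erase ℓ) (Finset.erase_ssubset hℓS) _ hρ' pm'
      rw [decode_eq_of hne' hmin]
      by_cases hs : side ℓ = side ρ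
      · rw [if_pos hs]
        have hE := encode_of_nonempty (side := side) hne
        rw [if_pos hs] at hE
        rw [hE]
        simp only [List.tail_cons, List.head?_cons, Option.getD_some]
        rw [hIH]
        funext w
        by_cases hwℓ : w = ℓ
        · subst hwℓ; simp [hℓdef]
        · simp [Function.update_of_ne hwℓ]
      · rw [if_neg hs]
        have hE := encode_of_nonempty (side := side) hne
        rw [if_neg hs] at hE
        rw [hE]
        simp only [List.tail_cons, List.head?_cons, Option.getD_some]
        rw [hIH]
        funext w
        by_cases hwℓ : w = ℓ
        · subst hwℓ; simp [hℓdef]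
        · simp [Function.update_of_ne hwℓ]
    · have hSe : S.erase ρ = ∅ := by
        by_contra h
        exact hne (leaves_nonempty pm (Finset.nonempty_iff_ne_empty.2 h))
      have hdle : ¬ (dleaves side ρ S (encode side ρ S p).1 (encode side ρ S p).2).Nonempty := by
        rw [Finset.nonempty_iff_ne_empty, not_not]
        apply Finset.eq_empty_of_forall_notMem
        intro x hx
        have := (Finset.mem_filter.1 hx).1
        rw [hSe] at this
        exact Finset.notMem_empty x this
      rw [decode_of_empty hdle]
      funext w
      have : p w = w := pm.2.1 w (by rw [hSe]; exact Finset.notMem_empty w)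
      simp [this]


lemma mem_of_getLast?' {l : List V} {a : V} (h : l.getLast? = some a) : a ∈ l := by
  obtain ⟨h1, h2⟩ := List.mem_getLast?_eq_getLast (by rw [h]; rfl)
  subst h2; exact List.getLast_mem h1

lemma dleaves_nonempty {S : Finset V} {α β : List V} (hρ : ρ ∈ S)
    (hcode : IsCode side ρ S (α, β)) (hSe : (S.erase ρ).Nonempty) :
    (dleaves side ρ S α β).Nonempty := by
  obtain ⟨hc1, hc2, hlen1, hlen2, hlast⟩ := hcode
  dsimp only at hc1 hc2 hlen1 hlen2 hlast
  by_contra hne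
  rw [Finset.nonempty_iff_ne_empty, not_not] at hne
  have hall : ∀ v ∈ S.erase ρ, v ∈ (if side v = side ρ then α else β) := by
    intro v hv
    by_contra hmem
    have : v ∈ dleaves side ρ S α β := Finset.mem_filter.2 ⟨hv, hmem⟩
    rw [hne] at this
    exact Finset.notMem_empty v this
  rcases hlast with hα0 | hlast2
  · -- α = [], so bcnt = 0
    have hb : bcnt side ρ S = 0 := by rw [← hlen1, hα0]; rfl
    obtain ⟨v, hv⟩ := hSe
    by_cases hsv : side v = side ρ
    · have := hall v hv
      rw [if_pos hsv, hα0] at this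
      exact List.not_mem_nil this
    · have hmem : v ∈ S.filter (fun u => side u ≠ side ρ) :=
        Finset.mem_filter.2 ⟨(Finset.mem_erase.1 hv).2, hsv⟩
      have := Finset.card_pos.2 ⟨v, hmem⟩
      unfold bcnt at hb
      omega
  · have hρα : ρ ∈ α := mem_of_getLast?' hlast2
    have hSa : S.filter (fun u => side u = side ρ) ⊆ α.toFinset := by
      intro x hx
      rw [List.mem_toFinset]
      obtain ⟨hxS, hxs⟩ := Finset.mem_filter.1 hx
      by_cases hxρ : x = ρ
      · subst hxρ; exact hρα
      · have := hall x (Finset.mem_erase.2 ⟨hxρ, hxS⟩)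
        rwa [if_pos hxs] at this
    have hSb : S.filter (fun u => side u ≠ side ρ) ⊆ β.toFinset := by
      intro x hx
      rw [List.mem_toFinset]
      obtain ⟨hxS, hxs⟩ := Finset.mem_filter.1 hx
      have hxρ : x ≠ ρ := fun e => hxs (by rw [e])
      have := hall x (Finset.mem_erase.2 ⟨hxρ, hxS⟩)
      rwa [if_neg hxs] at this
    have h1 : acnt side ρ S ≤ α.length :=
      le_trans (Finset.card_le_card hSa) (List.toFinset_card_le α)
    have h2 : bcnt side ρ S ≤ β.length :=
      le_trans (Finset.card_le_card hSb) (List.toFinset_card_le β)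
    omega

lemma isPM_decode (S : Finset V) :
    ∀ α β, ρ ∈ S → IsCode side ρ S (α, β) → IsPM side ρ S (decode side ρ S α β) := by
  induction S using Finset.strongInduction with
  | _ S IH =>
    intro α β hρ hcode
    obtain ⟨hc1, hc2, hlen1, hlen2, hlast⟩ := hcode
    dsimp only at hc1 hc2 hlen1 hlen2 hlast
    by_cases hSe : (S.erase ρ).Nonempty
    · have hne : (dleaves side ρ S α β).Nonempty :=
        dleaves_nonempty hρ ⟨hc1, hc2, hlen1, hlen2, hlast⟩ hSe
      set ℓ := (dleaves side ρ S α β).min' hne with hℓdef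
      have hℓmem : ℓ ∈ dleaves side ρ S α β := Finset.min'_mem _ hne
      have hℓe : ℓ ∈ S.erase ρ := (Finset.mem_filter.1 hℓmem).1
      have hℓnotin : ℓ ∉ (if side ℓ = side ρ then α else β) := (Finset.mem_filter.1 hℓmem).2
      have hℓρ : ℓ ≠ ρ := (Finset.mem_erase.1 hℓe).1
      have hℓS : ℓ ∈ S := (Finset.mem_erase.1 hℓe).2
      have hρ' : ρ ∈ S.erase ℓ := Finset.mem_erase.2 ⟨Ne.symm hℓρ, hρ⟩
      by_cases hs : side ℓ = side ρ
      · rw [if_pos hs] at hℓnotin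
        have hane : 1 < acnt side ρ S := by
          apply Finset.one_lt_card.2
          exact ⟨ℓ, Finset.mem_filter.2 ⟨hℓS, hs⟩, ρ, Finset.mem_filter.2 ⟨hρ, rfl⟩, hℓρ⟩
        rcases β with _ | ⟨n, β'⟩
        · simp only [List.length_nil] at hlen2; omega
        · have hn : n ∈ S ∧ side n ≠ side ρ := hc2 n (List.mem_cons_self)
          have hnℓ : n ≠ ℓ := fun e => hn.2 (by rw [e, hs])
          have hcode' : IsCode side ρ (S.erase ℓ) (α, β') := by
            refine ⟨?_, ?_, ?_, ?_, hlast⟩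
            · intro x hx
              obtain ⟨hxS, hxs⟩ := hc1 x hx
              exact ⟨Finset.mem_erase.2 ⟨fun e => hℓnotin (e ▸ hx), hxS⟩, hxs⟩
            · intro x hx
              obtain ⟨hxS, hxs⟩ := hc2 x (List.mem_cons_of_mem n hx)
              exact ⟨Finset.mem_erase.2 ⟨fun e => hxs (by rw [e, hs]), hxS⟩, hxs⟩
            · rw [bcnt_erase_same hs]; exact hlen1
            · show β'.length + 1 = acnt side ρ (S.erase ℓ)
              have := acnt_erase_same (side := side) hℓS hs
              simp only [List.length_cons] at hlen2
              omega
          have pm' := IH (S.erase ℓ) (Finset.erase_ssubset hℓS) α β' hρ' hcode'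
          have hdec : decode side ρ S α (n :: β')
              = Function.update (decode side ρ (S.erase ℓ) α β') ℓ n := by
            rw [decode_eq_of hne hℓdef.symm, if_pos hs]
            simp
          rw [hdec]
          have hreach : ∀ w ∈ S.erase ℓ,
              Reaches ρ (Function.update (decode side ρ (S.erase ℓ) α β') ℓ n) w := by
            intro w hw
            obtain ⟨k, hk⟩ := pm'.2.2 w hw
            exact ⟨k, by rw [iterate_update pm' (Finset.notMem_erase ℓ S) hw]; exact hk⟩
          refine ⟨?_, ?_, ?_⟩
          · intro v hv
            by_cases hvℓ : v = ℓ
            · subst hvℓ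
              rw [Function.update_self]
              exact ⟨hn.1, fun e => hn.2 (e.trans hs)⟩
            · rw [Function.update_of_ne hvℓ _ _]
              have hv' : v ∈ (S.erase ℓ).erase ρ :=
                Finset.mem_erase.2 ⟨(Finset.mem_erase.1 hv).1,
                  Finset.mem_erase.2 ⟨hvℓ, (Finset.mem_erase.1 hv).2⟩⟩
              exact ⟨Finset.mem_of_mem_erase (pm'.1 v hv').1, (pm'.1 v hv').2⟩
          · intro v hv
            have hvℓ : v ≠ ℓ := fun e => hv (e ▸ hℓe)
            rw [Function.update_of_ne hvℓ _ _]
            apply pm'.2.1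
            intro hmem
            exact hv (Finset.mem_erase.2 ⟨(Finset.mem_erase.1 hmem).1,
              Finset.mem_of_mem_erase (Finset.mem_erase.1 hmem).2⟩)
          · intro v hv
            by_cases hvℓ : v = ℓ
            · subst hvℓ
              obtain ⟨k, hk⟩ := hreach n (Finset.mem_erase.2 ⟨hnℓ, hn.1⟩)
              refine ⟨k + 1, ?_⟩
              rw [Function.iterate_succ_apply, Function.update_self]
              exact hk
            · exact hreach v (Finset.mem_erase.2 ⟨hvℓ, hv⟩)
      · rw [if_neg hs] at hℓnotin
        have hbne : 1 ≤ bcnt side ρ S :=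
          Finset.card_pos.2 ⟨ℓ, Finset.mem_filter.2 ⟨hℓS, hs⟩⟩
        rcases α with _ | ⟨n, α'⟩
        · simp only [List.length_nil] at hlen1; omega
        · have hn : n ∈ S ∧ side n = side ρ := hc1 n (List.mem_cons_self)
          have hnℓ : n ≠ ℓ := fun e => hs (by rw [← e, hn.2])
          have hcode' : IsCode side ρ (S.erase ℓ) (α', β) := by
            refine ⟨?_, ?_, ?_, ?_, ?_⟩
            · intro x hx
              obtain ⟨hxS, hxs⟩ := hc1 x (List.mem_cons_of_mem n hx)
              exact ⟨Finset.mem_erase.2 ⟨fun e => hs (by rw [← e, hxs]), hxS⟩, hxs⟩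
            · intro x hx
              obtain ⟨hxS, hxs⟩ := hc2 x hx
              exact ⟨Finset.mem_erase.2 ⟨fun e => hℓnotin (e ▸ hx), hxS⟩, hxs⟩
            · show α'.length = bcnt side ρ (S.erase ℓ)
              have := bcnt_erase_opp (side := side) hℓS hs
              simp only [List.length_cons] at hlen1
              omega
            · rw [acnt_erase_opp hs]; exact hlen2
            · rcases α' with _ | ⟨y, t⟩
              · exact Or.inl rfl
              · right
                rcases hlast with h | h
                · cases h
                · rwa [List.getLast?_cons_cons] at h
          have pm' := IH (S.erase ℓ) (Finset.erase_ssubset hℓS) α' β hρ' hcode'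
          have hdec : decode side ρ S (n :: α') β
              = Function.update (decode side ρ (S.erase ℓ) α' β) ℓ n := by
            rw [decode_eq_of hne hℓdef.symm, if_neg hs]
            simp
          rw [hdec]
          have hreach : ∀ w ∈ S.erase ℓ,
              Reaches ρ (Function.update (decode side ρ (S.erase ℓ) α' β) ℓ n) w := by
            intro w hw
            obtain ⟨k, hk⟩ := pm'.2.2 w hw
            exact ⟨k, by rw [iterate_update pm' (Finset.notMem_erase ℓ S) hw]; exact hk⟩
          refine ⟨?_, ?_, ?_⟩
          · intro v hv
            by_cases hvℓ : v = ℓ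
            · subst hvℓ
              rw [Function.update_self]
              exact ⟨hn.1, fun e => hs (by rw [← e, hn.2])⟩
            · rw [Function.update_of_ne hvℓ _ _]
              have hv' : v ∈ (S.erase ℓ).erase ρ :=
                Finset.mem_erase.2 ⟨(Finset.mem_erase.1 hv).1,
                  Finset.mem_erase.2 ⟨hvℓ, (Finset.mem_erase.1 hv).2⟩⟩
              exact ⟨Finset.mem_of_mem_erase (pm'.1 v hv').1, (pm'.1 v hv').2⟩
          · intro v hv
            have hvℓ : v ≠ ℓ := fun e => hv (e ▸ hℓe)
            rw [Function.update_of_ne hvℓ _ _]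
            apply pm'.2.1
            intro hmem
            exact hv (Finset.mem_erase.2 ⟨(Finset.mem_erase.1 hmem).1,
              Finset.mem_of_mem_erase (Finset.mem_erase.1 hmem).2⟩)
          · intro v hv
            by_cases hvℓ : v = ℓ
            · subst hvℓ
              obtain ⟨k, hk⟩ := hreach n (Finset.mem_erase.2 ⟨hnℓ, hn.1⟩)
              refine ⟨k + 1, ?_⟩
              rw [Function.iterate_succ_apply, Function.update_self]
              exact hk
            · exact hreach v (Finset.mem_erase.2 ⟨hvℓ, hv⟩)
    · rw [Finset.not_nonempty_iff_eq_empty] at hSe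
      have hdle : ¬ (dleaves side ρ S α β).Nonempty := by
        rw [Finset.nonempty_iff_ne_empty, not_not]
        apply Finset.eq_empty_of_forall_notMem
        intro x hx
        have := (Finset.mem_filter.1 hx).1
        rw [hSe] at this
        exact Finset.notMem_empty x this
      rw [decode_of_empty hdle]
      refine ⟨?_, fun v _ => rfl, ?_⟩
      · intro v hv
        rw [hSe] at hv
        exact absurd hv (Finset.notMem_empty v)
      · intro v hv
        have hvρ : v = ρ := by
          by_contra h
          have : v ∈ S.erase ρ := Finset.mem_erase.2 ⟨h, hv⟩
          rw [hSe] at this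
          exact Finset.notMem_empty v this
        exact ⟨0, hvρ⟩


lemma update_self_of_fix {f : V → V} {a : V} (h : f a = a) :
    Function.update f a a = f := by
  funext x
  by_cases hx : x = a
  · subst hx; rw [Function.update_self, h]
  · rw [Function.update_of_ne hx _ _]

lemma encode_eq_of {S : Finset V} {p : V → V} (h : (leaves ρ S p).Nonempty) {ℓ : V}
    (hℓ : (leaves ρ S p).min' h = ℓ) :
    encode side ρ S p =
      (if side ℓ = side ρ then
        ((encode side ρ (S.erase ℓ) (Function.update p ℓ ℓ)).1,
          p ℓ :: (encode side ρ (S.erase ℓ) (Function.update p ℓ ℓ)).2)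
      else
        (p ℓ :: (encode side ρ (S.erase ℓ) (Function.update p ℓ ℓ)).1,
          (encode side ρ (S.erase ℓ) (Function.update p ℓ ℓ)).2)) := by
  subst hℓ; exact encode_of_nonempty h

lemma isLf_iff_decode (S : Finset V) :
    ∀ α β, ρ ∈ S → IsCode side ρ S (α, β) → ∀ v ∈ S.erase ρ,
      ((∀ w ∈ S.erase ρ, decode side ρ S α β w ≠ v) ↔
        v ∉ (if side v = side ρ then α else β)) := by
  induction S using Finset.strongInduction with
  | _ S IH =>
    intro α β hρ hcode v hv
    obtain ⟨hc1, hc2, hlen1, hlen2, hlast⟩ := hcode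
    dsimp only at hc1 hc2 hlen1 hlen2 hlast
    have hSe : (S.erase ρ).Nonempty := ⟨v, hv⟩
    have hne : (dleaves side ρ S α β).Nonempty :=
      dleaves_nonempty hρ ⟨hc1, hc2, hlen1, hlen2, hlast⟩ hSe
    set ℓ := (dleaves side ρ S α β).min' hne with hℓdef
    have hℓmem : ℓ ∈ dleaves side ρ S α β := Finset.min'_mem _ hne
    have hℓe : ℓ ∈ S.erase ρ := (Finset.mem_filter.1 hℓmem).1
    have hℓnotin : ℓ ∉ (if side ℓ = side ρ then α else β) := (Finset.mem_filter.1 hℓmem).2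
    have hℓρ : ℓ ≠ ρ := (Finset.mem_erase.1 hℓe).1
    have hℓS : ℓ ∈ S := (Finset.mem_erase.1 hℓe).2
    have hρ' : ρ ∈ S.erase ℓ := Finset.mem_erase.2 ⟨Ne.symm hℓρ, hρ⟩
    by_cases hs : side ℓ = side ρ
    · rw [if_pos hs] at hℓnotin
      have hane : 1 < acnt side ρ S := by
        apply Finset.one_lt_card.2
        exact ⟨ℓ, Finset.mem_filter.2 ⟨hℓS, hs⟩, ρ, Finset.mem_filter.2 ⟨hρ, rfl⟩, hℓρ⟩
      rcases β with _ | ⟨n, β'⟩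
      · simp only [List.length_nil] at hlen2; omega
      have hn : n ∈ S ∧ side n ≠ side ρ := hc2 n (List.mem_cons_self)
      have hnℓ : n ≠ ℓ := fun e => hn.2 (by rw [e, hs])
      have hcode' : IsCode side ρ (S.erase ℓ) (α, β') := by
        refine ⟨?_, ?_, ?_, ?_, hlast⟩
        · intro x hx
          obtain ⟨hxS, hxs⟩ := hc1 x hx
          exact ⟨Finset.mem_erase.2 ⟨fun e => hℓnotin (e ▸ hx), hxS⟩, hxs⟩
        · intro x hx
          obtain ⟨hxS, hxs⟩ := hc2 x (List.mem_cons_of_mem n hx)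
          exact ⟨Finset.mem_erase.2 ⟨fun e => hxs (by rw [e, hs]), hxS⟩, hxs⟩
        · rw [bcnt_erase_same hs]; exact hlen1
        · show β'.length + 1 = acnt side ρ (S.erase ℓ)
          have := acnt_erase_same (side := side) hℓS hs
          simp only [List.length_cons] at hlen2
          omega
      have pm' := isPM_decode (S.erase ℓ) α β' hρ' hcode'
      have hdec : decode side ρ S α (n :: β')
          = Function.update (decode side ρ (S.erase ℓ) α β') ℓ n := by
        rw [decode_eq_of hne hℓdef.symm, if_pos hs]
        simp
      rw [hdec]
      by_cases hvℓ : v = ℓ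
      · subst hvℓ
        refine iff_of_true ?_ (by rw [if_pos hs]; exact hℓnotin)
        intro w hw
        by_cases hwℓ : w = ℓ
        · subst hwℓ; rw [Function.update_self]; exact hnℓ
        · rw [Function.update_of_ne hwℓ _ _]
          have hw' : w ∈ (S.erase ℓ).erase ρ :=
            Finset.mem_erase.2 ⟨(Finset.mem_erase.1 hw).1,
              Finset.mem_erase.2 ⟨hwℓ, (Finset.mem_erase.1 hw).2⟩⟩
          exact (Finset.mem_erase.1 (pm'.1 w hw').1).1
      · by_cases hvn : v = n
        · refine iff_of_false ?_ ?_
          · intro h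
            have := h ℓ hℓe
            rw [Function.update_self] at this
            exact this hvn.symm
          · have hsv : ¬ side v = side ρ := by rw [hvn]; exact hn.2
            rw [if_neg hsv]
            simp [hvn]
        · have hv' : v ∈ (S.erase ℓ).erase ρ :=
            Finset.mem_erase.2 ⟨(Finset.mem_erase.1 hv).1,
              Finset.mem_erase.2 ⟨hvℓ, (Finset.mem_erase.1 hv).2⟩⟩
          have hIH := IH (S.erase ℓ) (Finset.erase_ssubset hℓS) α β' hρ' hcode' v hv'
          have hA : (∀ w ∈ S.erase ρ, Function.update (decode side ρ (S.erase ℓ) α β') ℓ n w ≠ v)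
              ↔ (∀ w ∈ (S.erase ℓ).erase ρ, decode side ρ (S.erase ℓ) α β' w ≠ v) := by
            constructor
            · intro h w hw
              have hwℓ : w ≠ ℓ := (Finset.mem_erase.1 (Finset.mem_erase.1 hw).2).1
              have := h w (Finset.mem_erase.2 ⟨(Finset.mem_erase.1 hw).1,
                Finset.mem_of_mem_erase (Finset.mem_erase.1 hw).2⟩)
              rwa [Function.update_of_ne hwℓ _ _] at this
            · intro h w hw
              by_cases hwℓ : w = ℓ
              · subst hwℓ; rw [Function.update_self]; exact fun e => hvn e.symm
              · rw [Function.update_of_ne hwℓ _ _]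
                exact h w (Finset.mem_erase.2 ⟨(Finset.mem_erase.1 hw).1,
                  Finset.mem_erase.2 ⟨hwℓ, (Finset.mem_erase.1 hw).2⟩⟩)
          refine hA.trans (hIH.trans ?_)
          by_cases hsv : side v = side ρ
          · rw [if_pos hsv, if_pos hsv]
          · rw [if_neg hsv, if_neg hsv]
            simp only [List.mem_cons, not_or]
            constructor
            · exact fun h => ⟨hvn, h⟩
            · exact fun h => h.2
    · rw [if_neg hs] at hℓnotin
      have hbne : 1 ≤ bcnt side ρ S :=
        Finset.card_pos.2 ⟨ℓ, Finset.mem_filter.2 ⟨hℓS, hs⟩⟩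
      rcases α with _ | ⟨n, α'⟩
      · simp only [List.length_nil] at hlen1; omega
      have hn : n ∈ S ∧ side n = side ρ := hc1 n (List.mem_cons_self)
      have hnℓ : n ≠ ℓ := fun e => hs (by rw [← e, hn.2])
      have hcode' : IsCode side ρ (S.erase ℓ) (α', β) := by
        refine ⟨?_, ?_, ?_, ?_, ?_⟩
        · intro x hx
          obtain ⟨hxS, hxs⟩ := hc1 x (List.mem_cons_of_mem n hx)
          exact ⟨Finset.mem_erase.2 ⟨fun e => hs (by rw [← e, hxs]), hxS⟩, hxs⟩
        · intro x hx
          obtain ⟨hxS, hxs⟩ := hc2 x hx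
          exact ⟨Finset.mem_erase.2 ⟨fun e => hℓnotin (e ▸ hx), hxS⟩, hxs⟩
        · show α'.length = bcnt side ρ (S.erase ℓ)
          have := bcnt_erase_opp (side := side) hℓS hs
          simp only [List.length_cons] at hlen1
          omega
        · rw [acnt_erase_opp hs]; exact hlen2
        · rcases α' with _ | ⟨y, t⟩
          · exact Or.inl rfl
          · right
            rcases hlast with h | h
            · cases h
            · rwa [List.getLast?_cons_cons] at h
      have pm' := isPM_decode (S.erase ℓ) α' β hρ' hcode'
      have hdec : decode side ρ S (n :: α') β
          = Function.update (decode side ρ (S.erase ℓ) α' β) ℓ n := by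
        rw [decode_eq_of hne hℓdef.symm, if_neg hs]
        simp
      rw [hdec]
      by_cases hvℓ : v = ℓ
      · subst hvℓ
        refine iff_of_true ?_ (by rw [if_neg hs]; exact hℓnotin)
        intro w hw
        by_cases hwℓ : w = ℓ
        · subst hwℓ; rw [Function.update_self]; exact hnℓ
        · rw [Function.update_of_ne hwℓ _ _]
          have hw' : w ∈ (S.erase ℓ).erase ρ :=
            Finset.mem_erase.2 ⟨(Finset.mem_erase.1 hw).1,
              Finset.mem_erase.2 ⟨hwℓ, (Finset.mem_erase.1 hw).2⟩⟩
          exact (Finset.mem_erase.1 (pm'.1 w hw').1).1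
      · by_cases hvn : v = n
        · refine iff_of_false ?_ ?_
          · intro h
            have := h ℓ hℓe
            rw [Function.update_self] at this
            exact this hvn.symm
          · have hsv : side v = side ρ := by rw [hvn]; exact hn.2
            rw [if_pos hsv]
            simp [hvn]
        · have hv' : v ∈ (S.erase ℓ).erase ρ :=
            Finset.mem_erase.2 ⟨(Finset.mem_erase.1 hv).1,
              Finset.mem_erase.2 ⟨hvℓ, (Finset.mem_erase.1 hv).2⟩⟩
          have hIH := IH (S.erase ℓ) (Finset.erase_ssubset hℓS) α' β hρ' hcode' v hv'
          have hA : (∀ w ∈ S.erase ρ, Function.update (decode side ρ (S.erase ℓ) α' β) ℓ n w ≠ v)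
              ↔ (∀ w ∈ (S.erase ℓ).erase ρ, decode side ρ (S.erase ℓ) α' β w ≠ v) := by
            constructor
            · intro h w hw
              have hwℓ : w ≠ ℓ := (Finset.mem_erase.1 (Finset.mem_erase.1 hw).2).1
              have := h w (Finset.mem_erase.2 ⟨(Finset.mem_erase.1 hw).1,
                Finset.mem_of_mem_erase (Finset.mem_erase.1 hw).2⟩)
              rwa [Function.update_of_ne hwℓ _ _] at this
            · intro h w hw
              by_cases hwℓ : w = ℓ
              · subst hwℓ; rw [Function.update_self]; exact fun e => hvn e.symm
              · rw [Function.update_of_ne hwℓ _ _]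
                exact h w (Finset.mem_erase.2 ⟨(Finset.mem_erase.1 hw).1,
                  Finset.mem_erase.2 ⟨hwℓ, (Finset.mem_erase.1 hw).2⟩⟩)
          refine hA.trans (hIH.trans ?_)
          by_cases hsv : side v = side ρ
          · rw [if_pos hsv, if_pos hsv]
            simp only [List.mem_cons, not_or]
            constructor
            · exact fun h => ⟨hvn, h⟩
            · exact fun h => h.2
          · rw [if_neg hsv, if_neg hsv]

lemma encode_decode (S : Finset V) :
    ∀ α β, ρ ∈ S → IsCode side ρ S (α, β) →
      encode side ρ S (decode side ρ S α β) = (α, β) := by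
  induction S using Finset.strongInduction with
  | _ S IH =>
    intro α β hρ hcode
    obtain ⟨hc1, hc2, hlen1, hlen2, hlast⟩ := hcode
    dsimp only at hc1 hc2 hlen1 hlen2 hlast
    by_cases hSe : (S.erase ρ).Nonempty
    · have hne : (dleaves side ρ S α β).Nonempty :=
        dleaves_nonempty hρ ⟨hc1, hc2, hlen1, hlen2, hlast⟩ hSe
      set ℓ := (dleaves side ρ S α β).min' hne with hℓdef
      have hℓmem : ℓ ∈ dleaves side ρ S α β := Finset.min'_mem _ hne
      have hℓe : ℓ ∈ S.erase ρ := (Finset.mem_filter.1 hℓmem).1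
      have hℓnotin : ℓ ∉ (if side ℓ = side ρ then α else β) := (Finset.mem_filter.1 hℓmem).2
      have hℓρ : ℓ ≠ ρ := (Finset.mem_erase.1 hℓe).1
      have hℓS : ℓ ∈ S := (Finset.mem_erase.1 hℓe).2
      have hρ' : ρ ∈ S.erase ℓ := Finset.mem_erase.2 ⟨Ne.symm hℓρ, hρ⟩
      have hleq : leaves ρ S (decode side ρ S α β) = dleaves side ρ S α β := by
        apply Finset.filter_congr
        intro x hx
        exact isLf_iff_decode S α β hρ ⟨hc1, hc2, hlen1, hlen2, hlast⟩ x hx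
      have hne2 : (leaves ρ S (decode side ρ S α β)).Nonempty := by
        rw [hleq]; exact hne
      have hmin : (leaves ρ S (decode side ρ S α β)).min' hne2 = ℓ := by
        simp only [hleq, hℓdef]
      rw [encode_eq_of hne2 hmin]
      by_cases hs : side ℓ = side ρ
      · rw [if_pos hs] at hℓnotin ⊢
        have hane : 1 < acnt side ρ S := by
          apply Finset.one_lt_card.2
          exact ⟨ℓ, Finset.mem_filter.2 ⟨hℓS, hs⟩, ρ, Finset.mem_filter.2 ⟨hρ, rfl⟩, hℓρ⟩
        rcases β with _ | ⟨n, β'⟩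
        · simp only [List.length_nil] at hlen2; omega
        have hn : n ∈ S ∧ side n ≠ side ρ := hc2 n (List.mem_cons_self)
        have hnℓ : n ≠ ℓ := fun e => hn.2 (by rw [e, hs])
        have hcode' : IsCode side ρ (S.erase ℓ) (α, β') := by
          refine ⟨?_, ?_, ?_, ?_, hlast⟩
          · intro x hx
            obtain ⟨hxS, hxs⟩ := hc1 x hx
            exact ⟨Finset.mem_erase.2 ⟨fun e => hℓnotin (e ▸ hx), hxS⟩, hxs⟩
          · intro x hx
            obtain ⟨hxS, hxs⟩ := hc2 x (List.mem_cons_of_mem n hx)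
            exact ⟨Finset.mem_erase.2 ⟨fun e => hxs (by rw [e, hs]), hxS⟩, hxs⟩
          · rw [bcnt_erase_same hs]; exact hlen1
          · show β'.length + 1 = acnt side ρ (S.erase ℓ)
            have := acnt_erase_same (side := side) hℓS hs
            simp only [List.length_cons] at hlen2
            omega
        have pm' := isPM_decode (S.erase ℓ) α β' hρ' hcode'
        have hdec : decode side ρ S α (n :: β')
            = Function.update (decode side ρ (S.erase ℓ) α β') ℓ n := by
          rw [decode_eq_of hne hℓdef.symm, if_pos hs]
          simp
        have hupd : Function.update (decode side ρ S α (n :: β')) ℓ ℓ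
            = decode side ρ (S.erase ℓ) α β' := by
          rw [hdec, Function.update_idem]
          have hfix : decode side ρ (S.erase ℓ) α β' ℓ = ℓ :=
            pm'.2.1 ℓ (fun hmem => Finset.notMem_erase ℓ S (Finset.mem_of_mem_erase hmem))
          exact update_self_of_fix hfix
        rw [hupd, IH (S.erase ℓ) (Finset.erase_ssubset hℓS) α β' hρ' hcode']
        rw [hdec, Function.update_self]
      · rw [if_neg hs] at hℓnotin ⊢
        have hbne : 1 ≤ bcnt side ρ S :=
          Finset.card_pos.2 ⟨ℓ, Finset.mem_filter.2 ⟨hℓS, hs⟩⟩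
        rcases α with _ | ⟨n, α'⟩
        · simp only [List.length_nil] at hlen1; omega
        have hn : n ∈ S ∧ side n = side ρ := hc1 n (List.mem_cons_self)
        have hnℓ : n ≠ ℓ := fun e => hs (by rw [← e, hn.2])
        have hcode' : IsCode side ρ (S.erase ℓ) (α', β) := by
          refine ⟨?_, ?_, ?_, ?_, ?_⟩
          · intro x hx
            obtain ⟨hxS, hxs⟩ := hc1 x (List.mem_cons_of_mem n hx)
            exact ⟨Finset.mem_erase.2 ⟨fun e => hs (by rw [← e, hxs]), hxS⟩, hxs⟩
          · intro x hx
            obtain ⟨hxS, hxs⟩ := hc2 x hx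
            exact ⟨Finset.mem_erase.2 ⟨fun e => hℓnotin (e ▸ hx), hxS⟩, hxs⟩
          · show α'.length = bcnt side ρ (S.erase ℓ)
            have := bcnt_erase_opp (side := side) hℓS hs
            simp only [List.length_cons] at hlen1
            omega
          · rw [acnt_erase_opp hs]; exact hlen2
          · rcases α' with _ | ⟨y, t⟩
            · exact Or.inl rfl
            · right
              rcases hlast with h | h
              · cases h
              · rwa [List.getLast?_cons_cons] at h
        have pm' := isPM_decode (S.erase ℓ) α' β hρ' hcode'
        have hdec : decode side ρ S (n :: α') β
            = Function.update (decode side ρ (S.erase ℓ) α' β) ℓ n := by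
          rw [decode_eq_of hne hℓdef.symm, if_neg hs]
          simp
        have hupd : Function.update (decode side ρ S (n :: α') β) ℓ ℓ
            = decode side ρ (S.erase ℓ) α' β := by
          rw [hdec, Function.update_idem]
          have hfix : decode side ρ (S.erase ℓ) α' β ℓ = ℓ :=
            pm'.2.1 ℓ (fun hmem => Finset.notMem_erase ℓ S (Finset.mem_of_mem_erase hmem))
          exact update_self_of_fix hfix
        rw [hupd, IH (S.erase ℓ) (Finset.erase_ssubset hℓS) α' β hρ' hcode']
        rw [hdec, Function.update_self]
    · rw [Finset.not_nonempty_iff_eq_empty] at hSe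
      have hα : α = [] := by
        apply List.length_eq_zero_iff.1
        rw [hlen1]
        unfold bcnt
        apply Finset.card_eq_zero.2
        apply Finset.eq_empty_of_forall_notMem
        intro x hx
        obtain ⟨hxS, hxs⟩ := Finset.mem_filter.1 hx
        have hxρ : x ≠ ρ := fun e => hxs (by rw [e])
        have : x ∈ S.erase ρ := Finset.mem_erase.2 ⟨hxρ, hxS⟩
        rw [hSe] at this
        exact Finset.notMem_empty x this
      have hβ : β = [] := by
        apply List.length_eq_zero_iff.1
        have hac : acnt side ρ S = 1 := by
          unfold acnt
          apply le_antisymm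
          · by_contra h
            push_neg at h
            obtain ⟨x, hx, y, hy, hxy⟩ := Finset.one_lt_card.1 h
            have : x ≠ ρ ∨ y ≠ ρ := by
              rcases eq_or_ne x ρ with rfl | hxρ
              · exact Or.inr (fun e => hxy (by rw [e]))
              · exact Or.inl hxρ
            rcases this with hh | hh
            · have : x ∈ S.erase ρ := Finset.mem_erase.2 ⟨hh, (Finset.mem_filter.1 hx).1⟩
              rw [hSe] at this; exact Finset.notMem_empty x this
            · have : y ∈ S.erase ρ := Finset.mem_erase.2 ⟨hh, (Finset.mem_filter.1 hy).1⟩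
              rw [hSe] at this; exact Finset.notMem_empty y this
          · exact acnt_pos hρ
        omega
      subst hα; subst hβ
      have hdle : ¬ (dleaves side ρ S [] []).Nonempty := by
        rw [Finset.nonempty_iff_ne_empty, not_not]
        apply Finset.eq_empty_of_forall_notMem
        intro x hx
        have := (Finset.mem_filter.1 hx).1
        rw [hSe] at this
        exact Finset.notMem_empty x this
      have hlv : ¬ (leaves ρ S (decode side ρ S [] [])).Nonempty := by
        rw [Finset.nonempty_iff_ne_empty, not_not]
        apply Finset.eq_empty_of_forall_notMem
        intro x hx
        have := (Finset.mem_filter.1 hx).1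
        rw [hSe] at this
        exact Finset.notMem_empty x this
      rw [encode_of_empty hlv]


theorem card_pm_eq_card_code (S : Finset V) (hρ : ρ ∈ S) :
    Nat.card {p : V → V // IsPM side ρ S p}
      = Nat.card {c : List V × List V // IsCode side ρ S c} := by
  apply Nat.card_eq_of_bijective
    (fun x => ⟨encode side ρ S x.1, isCode_encode S x.1 hρ x.2⟩)
  constructor
  · rintro ⟨a, ha⟩ ⟨b, hb⟩ h
    have h' : encode side ρ S a = encode side ρ S b := congrArg Subtype.val h
    apply Subtype.ext
    show a = b
    have h1 := decode_encode S a hρ ha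
    have h2 := decode_encode S b hρ hb
    rw [← h1, ← h2, h']
  · rintro ⟨c, hc⟩
    have hc' : IsCode side ρ S (c.1, c.2) := by rwa [Prod.mk.eta]
    refine ⟨⟨decode side ρ S c.1 c.2, isPM_decode S c.1 c.2 hρ hc'⟩, ?_⟩
    apply Subtype.ext
    show encode side ρ S (decode side ρ S c.1 c.2) = c
    rw [encode_decode S c.1 c.2 hρ hc', Prod.mk.eta]

def listEquiv (T : Finset V) (n : ℕ) :
    {l : List V // l.length = n ∧ ∀ x ∈ l, x ∈ T} ≃ (Fin n → {x // x ∈ T}) where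
  toFun l i := ⟨l.1.get ⟨i.1, by rw [l.2.1]; exact i.2⟩, l.2.2 _ (l.1.get_mem _)⟩
  invFun g := ⟨List.ofFn (fun i => (g i).1), by
    refine ⟨List.length_ofFn, ?_⟩
    intro x hx
    obtain ⟨i, hi⟩ := List.mem_ofFn.1 hx
    exact hi ▸ (g i).2⟩
  left_inv l := by
    apply Subtype.ext
    apply List.ext_get
    · simp [l.2.1]
    · intro i h1 h2
      simp [List.get_ofFn]
  right_inv g := by
    funext i
    apply Subtype.ext
    simp [List.get_ofFn]

theorem card_code (S : Finset V) (hρ : ρ ∈ S) (hb : 1 ≤ bcnt side ρ S) :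
    Nat.card {c : List V × List V // IsCode side ρ S c}
      = (acnt side ρ S) ^ (bcnt side ρ S - 1) * (bcnt side ρ S) ^ (acnt side ρ S - 1) := by
  classical
  set A := S.filter (fun v => side v = side ρ) with hA
  set B := S.filter (fun v => side v ≠ side ρ) with hB
  have ha1 : 1 ≤ acnt side ρ S := acnt_pos hρ
  -- split into two independent subtypes
  have e1 : {c : List V × List V // IsCode side ρ S c} ≃
      {l : List V // l.length = bcnt side ρ S ∧ (∀ x ∈ l, x ∈ S ∧ side x = side ρ) ∧
        (l = [] ∨ l.getLast? = some ρ)} ×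
      {l : List V // l.length + 1 = acnt side ρ S ∧ ∀ x ∈ l, x ∈ S ∧ side x ≠ side ρ} :=
    { toFun := fun c => ⟨⟨c.1.1, c.2.2.2.1, c.2.1, c.2.2.2.2.2⟩, ⟨c.1.2, c.2.2.2.2.1, c.2.2.1⟩⟩
      invFun := fun x => ⟨(x.1.1, x.2.1), x.1.2.2.1, x.2.2.2, x.1.2.1, x.2.2.1, x.1.2.2.2⟩
      left_inv := fun c => by apply Subtype.ext; exact Prod.mk.eta
      right_inv := fun x => by constructor }
  have e2 : {l : List V // l.length = bcnt side ρ S ∧ (∀ x ∈ l, x ∈ S ∧ side x = side ρ) ∧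
        (l = [] ∨ l.getLast? = some ρ)} ≃
      {l : List V // l.length = bcnt side ρ S - 1 ∧ ∀ x ∈ l, x ∈ A} :=
    { toFun := fun l => ⟨l.1.dropLast, by rw [List.length_dropLast, l.2.1], fun x hx =>
        Finset.mem_filter.2 (l.2.2.1 x (List.dropLast_subset l.1 hx))⟩
      invFun := fun l => ⟨l.1 ++ [ρ], by
        refine ⟨?_, ?_, Or.inr (List.getLast?_concat)⟩
        · rw [List.length_append, l.2.1]; simp; omega
        · intro x hx
          rcases List.mem_append.1 hx with h | h
          · exact ⟨(Finset.mem_filter.1 (l.2.2 x h)).1, (Finset.mem_filter.1 (l.2.2 x h)).2⟩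
          · rw [List.mem_singleton.1 h]; exact ⟨hρ, rfl⟩⟩
      left_inv := fun l => by
        apply Subtype.ext
        have hne : l.1 ≠ [] := by
          intro h
          have := l.2.1
          rw [h] at this
          simp at this
          omega
        rcases l.2.2.2 with h | h
        · exact absurd h hne
        · obtain ⟨h1, h2⟩ := List.mem_getLast?_eq_getLast (by rw [h]; rfl)
          have h3 := List.dropLast_append_getLast h1
          rw [← h2] at h3
          exact h3
      right_inv := fun l => by
        apply Subtype.ext
        exact List.dropLast_concat ..  }
  have e3 : {l : List V // l.length + 1 = acnt side ρ S ∧ ∀ x ∈ l, x ∈ S ∧ side x ≠ side ρ} ≃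
      {l : List V // l.length = acnt side ρ S - 1 ∧ ∀ x ∈ l, x ∈ B} := by
    apply Equiv.subtypeEquivRight
    intro l
    constructor
    · rintro ⟨h1, h2⟩
      exact ⟨by omega, fun x hx => Finset.mem_filter.2 (h2 x hx)⟩
    · rintro ⟨h1, h2⟩
      refine ⟨by omega, fun x hx => ⟨(Finset.mem_filter.1 (h2 x hx)).1,
        (Finset.mem_filter.1 (h2 x hx)).2⟩⟩
  have E := e1.trans (Equiv.prodCongr
    (e2.trans (listEquiv A (bcnt side ρ S - 1)))
    (e3.trans (listEquiv B (acnt side ρ S - 1))))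
  rw [Nat.card_congr E, Nat.card_eq_fintype_card, Fintype.card_prod,
    Fintype.card_fun, Fintype.card_fun, Fintype.card_coe, Fintype.card_coe,
    Fintype.card_fin, Fintype.card_fin]
  rfl


open SimpleGraph in
def PMGraph (p : V → V) : SimpleGraph V where
  Adj x y := x ≠ y ∧ (p x = y ∨ p y = x)
  symm := ⟨fun x y h => ⟨h.1.symm, h.2.symm⟩⟩
  loopless := ⟨fun x h => h.1 rfl⟩

open SimpleGraph in
def CrossG (side : V → Bool) : SimpleGraph V where
  Adj x y := x ≠ y ∧ side x ≠ side y
  symm := ⟨fun x y h => ⟨h.1.symm, h.2.symm⟩⟩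
  loopless := ⟨fun x h => h.1 rfl⟩

@[simp] lemma pmGraph_adj {p : V → V} {x y : V} :
    (PMGraph p).Adj x y ↔ x ≠ y ∧ (p x = y ∨ p y = x) := Iff.rfl

@[simp] lemma crossG_adj {side : V → Bool} {x y : V} :
    (CrossG side).Adj x y ↔ x ≠ y ∧ side x ≠ side y := Iff.rfl

section Bridge

open SimpleGraph

variable [Fintype V] {p : V → V}

lemma pm_univ_fix (pm : IsPM side ρ Finset.univ p) : p ρ = ρ :=
  pm.2.1 ρ (by simp)

lemma pm_univ_cross (pm : IsPM side ρ Finset.univ p) {v : V} (hv : v ≠ ρ) :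
    side (p v) ≠ side v :=
  (pm.1 v (Finset.mem_erase.2 ⟨hv, Finset.mem_univ v⟩)).2

lemma pm_univ_reach (pm : IsPM side ρ Finset.univ p) (v : V) : Reaches ρ p v :=
  pm.2.2 v (Finset.mem_univ v)

lemma pm_ne (pm : IsPM side ρ Finset.univ p) {v : V} (hv : v ≠ ρ) : p v ≠ v :=
  fun e => pm_univ_cross pm hv (by rw [e])

lemma pmgraph_reachable (pm : IsPM side ρ Finset.univ p) :
    ∀ v, (PMGraph p).Reachable v ρ := by
  intro v
  generalize hn : ht ρ p v = n
  induction n using Nat.strong_induction_on generalizing v with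
  | _ n IH =>
    by_cases hv : v = ρ
    · subst hv; rfl
    · have hadj : (PMGraph p).Adj v (p v) := ⟨(pm_ne pm hv).symm, Or.inl rfl⟩
      have hlt : ht ρ p (p v) < n := hn ▸ ht_lt (pm_univ_reach pm v) hv
      exact hadj.reachable.trans (IH _ hlt (p v) rfl)

lemma pmgraph_connected (pm : IsPM side ρ Finset.univ p) : (PMGraph p).Connected := by
  rw [connected_iff]
  exact ⟨fun u v => (pmgraph_reachable pm u).trans (pmgraph_reachable pm v).symm, ⟨ρ⟩⟩

lemma head_getLast_nodup {γ : Type*} {e : γ} {t : List γ} (hnd : (e :: t).Nodup)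
    (hlen : 1 ≤ t.length) (h : (e :: t).getLast? = some e) : False := by
  rcases t with _ | ⟨b, t2⟩
  · simp at hlen
  · rw [List.getLast?_cons_cons] at h
    have : e ∈ b :: t2 := by
      obtain ⟨h1, h2⟩ := List.mem_getLast?_eq_getLast (by rw [h]; rfl)
      subst h2; exact List.getLast_mem h1
    exact (List.nodup_cons.1 hnd).1 this

lemma pmgraph_acyclic (pm : IsPM side ρ Finset.univ p) : (PMGraph p).IsAcyclic := by
  classical
  intro u c hc
  have hsup : c.support.toFinset.Nonempty :=
    ⟨u, List.mem_toFinset.2 c.start_mem_support⟩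
  obtain ⟨w, hwmem, hwmax⟩ := Finset.exists_max_image _ (fun v => ht ρ p v) hsup
  rw [List.mem_toFinset] at hwmem
  have hmax : ∀ x ∈ c.support, ht ρ p x ≤ ht ρ p w :=
    fun x hx => hwmax x (List.mem_toFinset.2 hx)
  have hc' : (c.rotate _ hwmem).IsCycle := hc.rotate hwmem
  set c' : (PMGraph p).Walk w w := c.rotate _ hwmem with hc'def
  have hmax' : ∀ x ∈ c'.support, ht ρ p x ≤ ht ρ p w := by
    intro x hx
    rw [Walk.support_eq_cons] at hx
    rcases List.mem_cons.1 hx with rfl | hx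
    · exact hmax _ hwmem
    · have hrot := Walk.support_rotate c _ hwmem
      apply hmax
      have : x ∈ c.support.tail := hrot.mem_iff.1 hx
      rw [Walk.support_eq_cons c]
      exact List.mem_cons_of_mem _ this
  have h3 := hc'.three_le_length
  have hnil : ¬ c'.Nil := by rw [Walk.nil_iff_length_eq]; omega
  have hnil'' : ¬ c'.reverse.Nil := by
    rw [Walk.nil_iff_length_eq, Walk.length_reverse]; omega
  have hadjx : (PMGraph p).Adj w (c'.getVert 1) := Walk.adj_snd hnil
  have hadjy : (PMGraph p).Adj w (c'.reverse.getVert 1) := Walk.adj_snd hnil''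
  have hxmem : c'.getVert 1 ∈ c'.support :=
    Walk.mem_support_iff_exists_getVert.2 ⟨1, rfl, by omega⟩
  have hymem : c'.reverse.getVert 1 ∈ c'.support := by
    have : c'.reverse.getVert 1 ∈ c'.reverse.support :=
      Walk.mem_support_iff_exists_getVert.2 ⟨1, rfl, by rw [Walk.length_reverse]; omega⟩
    rwa [Walk.support_reverse, List.mem_reverse] at this
  have key : ∀ z, (PMGraph p).Adj w z → z ∈ c'.support → z = p w := by
    intro z hadj hzmem
    rcases hadj.2 with h | h
    · exact h.symm
    · exfalso
      have hzρ : z ≠ ρ := by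
        intro e
        rw [e, pm_univ_fix pm] at h
        exact hadj.1 (by rw [← h, e])
      have h1 := ht_lt (pm_univ_reach pm z) hzρ
      rw [h] at h1
      have h2 := hmax' z hzmem
      omega
  have hx := key _ hadjx hxmem
  have hy := key _ hadjy hymem
  -- first edge and last edge of c'
  have hE1 : c'.edges = s(w, c'.getVert 1) :: c'.tail.edges := by
    conv_lhs => rw [← Walk.cons_tail_eq c' hnil]
    exact Walk.edges_cons _ _
  have hE2 : c'.reverse.edges = s(w, c'.reverse.getVert 1) :: c'.reverse.tail.edges := by
    conv_lhs => rw [← Walk.cons_tail_eq c'.reverse hnil'']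
    exact Walk.edges_cons _ _
  have hrev : c'.edges.getLast? = some s(w, c'.reverse.getVert 1) := by
    rw [← List.head?_reverse, ← Walk.edges_reverse, hE2]
    rfl
  have hnodup : c'.edges.Nodup := hc'.isCircuit.isTrail.edges_nodup
  have hlen : 1 ≤ c'.tail.edges.length := by
    have := Walk.length_edges c'
    rw [hE1] at this
    simp only [List.length_cons] at this
    omega
  rw [hE1] at hrev hnodup
  apply head_getLast_nodup hnodup hlen
  rw [hrev, hx, hy]


open SimpleGraph in
noncomputable def wtr (T : SimpleGraph V) (p : V → V) (ρ : V)
    (hadj : ∀ v, v ≠ ρ → T.Adj v (p v)) (hre : ∀ v, Reaches ρ p v) :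
    ∀ v : V, T.Walk v ρ := fun v =>
  if hv : v = ρ then Walk.nil.copy hv.symm rfl
  else Walk.cons (hadj v hv) (wtr T p ρ hadj hre (p v))
termination_by v => ht ρ p v
decreasing_by exact ht_lt (hre v) hv

open SimpleGraph in
lemma wtr_eq_of_ne {T : SimpleGraph V} {p : V → V}
    {hadj : ∀ v, v ≠ ρ → T.Adj v (p v)} {hre : ∀ v, Reaches ρ p v} {v : V} (hv : v ≠ ρ) :
    wtr T p ρ hadj hre v = Walk.cons (hadj v hv) (wtr T p ρ hadj hre (p v)) := by
  rw [wtr]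
  simp [hv]

open SimpleGraph in
lemma wtr_support {T : SimpleGraph V} {p : V → V}
    {hadj : ∀ v, v ≠ ρ → T.Adj v (p v)} {hre : ∀ v, Reaches ρ p v} :
    ∀ v, ∀ u ∈ (wtr T p ρ hadj hre v).support, ht ρ p u ≤ ht ρ p v := by
  intro v
  generalize hn : ht ρ p v = n
  induction n using Nat.strong_induction_on generalizing v with
  | _ n IH =>
    intro u hu
    by_cases hv : v = ρ
    · subst hv
      have hwe : wtr T p v hadj hre v = Walk.nil.copy rfl rfl := by
        rw [wtr]; simp
      rw [hwe] at hu
      simp only [Walk.support_copy, Walk.support_nil, List.mem_singleton] at hu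
      subst hu
      simp [ht_root]
    · rw [wtr_eq_of_ne hv, Walk.support_cons] at hu
      rcases List.mem_cons.1 hu with rfl | hu
      · omega
      · have hlt : ht ρ p (p v) < n := hn ▸ ht_lt (hre v) hv
        have := IH _ hlt (p v) rfl u hu
        omega

open SimpleGraph in
lemma wtr_isPath {T : SimpleGraph V} {p : V → V}
    {hadj : ∀ v, v ≠ ρ → T.Adj v (p v)} {hre : ∀ v, Reaches ρ p v} :
    ∀ v, (wtr T p ρ hadj hre v).IsPath := by
  intro v
  generalize hn : ht ρ p v = n
  induction n using Nat.strong_induction_on generalizing v with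
  | _ n IH =>
    by_cases hv : v = ρ
    · subst hv
      rw [wtr]
      simp
    · rw [wtr_eq_of_ne hv]
      have hlt : ht ρ p (p v) < n := hn ▸ ht_lt (hre v) hv
      rw [Walk.cons_isPath_iff]
      refine ⟨IH _ hlt (p v) rfl, fun hmem => ?_⟩
      have := wtr_support (hadj := hadj) (hre := hre) (p v) v hmem
      omega

open SimpleGraph in
lemma pmgraph_inj {p q : V → V} (pmp : IsPM side ρ Finset.univ p)
    (pmq : IsPM side ρ Finset.univ q) (hG : PMGraph p = PMGraph q) : p = q := by
  funext v
  by_cases hv : v = ρ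
  · subst hv; rw [pm_univ_fix pmp, pm_univ_fix pmq]
  · have hadjp : ∀ w, w ≠ ρ → (PMGraph p).Adj w (p w) :=
      fun w hw => ⟨(pm_ne pmp hw).symm, Or.inl rfl⟩
    have hadjq : ∀ w, w ≠ ρ → (PMGraph p).Adj w (q w) := by
      intro w hw
      rw [hG]
      exact ⟨(pm_ne pmq hw).symm, Or.inl rfl⟩
    have h1 := wtr_isPath (T := PMGraph p) (hadj := hadjp) (hre := pm_univ_reach pmp) v
    have h2 := wtr_isPath (T := PMGraph p) (hadj := hadjq) (hre := pm_univ_reach pmq) v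
    have huniq := (pmgraph_acyclic pmp).path_unique
      ⟨wtr (PMGraph p) p ρ hadjp (pm_univ_reach pmp) v, h1⟩
      ⟨wtr (PMGraph p) q ρ hadjq (pm_univ_reach pmq) v, h2⟩
    have hwalk : wtr (PMGraph p) p ρ hadjp (pm_univ_reach pmp) v
        = wtr (PMGraph p) q ρ hadjq (pm_univ_reach pmq) v := congrArg Subtype.val huniq
    rw [wtr_eq_of_ne hv, wtr_eq_of_ne hv] at hwalk
    have := congrArg (fun w => Walk.getVert w 1) hwalk
    simpa using this

open SimpleGraph in
lemma pmgraph_le (pm : IsPM side ρ Finset.univ p) : PMGraph p ≤ CrossG side := by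
  intro x y hxy
  obtain ⟨hne, h⟩ := hxy
  rcases h with h | h
  · have hx : x ≠ ρ := by
      intro e
      rw [e, pm_univ_fix pm] at h
      exact hne (by rw [e, ← h])
    exact ⟨hne, fun e => (pm_univ_cross pm hx) (by rw [h, ← e])⟩
  · have hy : y ≠ ρ := by
      intro e
      rw [e, pm_univ_fix pm] at h
      exact hne (by rw [e, ← h])
    exact ⟨hne, fun e => (pm_univ_cross pm hy) (by rw [h, e])⟩

open SimpleGraph in
lemma pmgraph_surj {T : SimpleGraph V} (hle : T ≤ CrossG side) (hT : T.IsTree) (ρ : V) :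
    ∃ p, IsPM side ρ Finset.univ p ∧ PMGraph p = T := by
  classical
  have hEU := hT.existsUnique_path
  let P : ∀ v, T.Walk v ρ := fun v => (hEU v ρ).choose
  have hPpath : ∀ v, (P v).IsPath := fun v => (hEU v ρ).choose_spec.1
  have hPuniq : ∀ v (w : T.Walk v ρ), w.IsPath → w = P v :=
    fun v w hw => ((hEU v ρ).choose_spec.2 w hw)
  have hProot : P ρ = Walk.nil := (hPuniq ρ Walk.nil Walk.IsPath.nil).symm
  have hpρ : (P ρ).getVert 1 = ρ := by rw [hProot]; rfl
  have hnotnil : ∀ v, v ≠ ρ → ¬ (P v).Nil := fun v hv => Walk.not_nil_of_ne hv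
  have hadj : ∀ v, v ≠ ρ → T.Adj v ((P v).getVert 1) :=
    fun v hv => Walk.adj_snd (hnotnil v hv)
  have htail : ∀ v, v ≠ ρ → P ((P v).getVert 1) = (P v).tail := by
    intro v hv
    exact (hPuniq _ ((P v).tail) ((hPpath v).tail)).symm
  have hlen : ∀ v, v ≠ ρ → (P ((P v).getVert 1)).length < (P v).length := by
    intro v hv
    rw [htail v hv]
    have := Walk.length_tail_add_one (hnotnil v hv)
    omega
  have hre : ∀ v, Reaches ρ (fun v => (P v).getVert 1) v := by
    intro v
    generalize hn : (P v).length = n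
    induction n using Nat.strong_induction_on generalizing v with
    | _ n IH =>
      by_cases hv : v = ρ
      · exact ⟨0, hv⟩
      · obtain ⟨k, hk⟩ := IH _ (hn ▸ hlen v hv) _ rfl
        exact ⟨k + 1, by rw [Function.iterate_succ_apply]; exact hk⟩
  have pm : IsPM side ρ Finset.univ (fun v => (P v).getVert 1) := by
    refine ⟨?_, ?_, fun v _ => hre v⟩
    · intro v hv
      have hvρ : v ≠ ρ := (Finset.mem_erase.1 hv).1
      exact ⟨Finset.mem_univ _, ((hle (hadj v hvρ)).2).symm⟩
    · intro v hv
      have hvρ : v = ρ := by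
        by_contra h
        exact hv (Finset.mem_erase.2 ⟨h, Finset.mem_univ v⟩)
      rw [hvρ]
      exact hpρ
  refine ⟨fun v => (P v).getVert 1, pm, ?_⟩
  have hle2 : PMGraph (fun v => (P v).getVert 1) ≤ T := by
    intro x y hxy
    obtain ⟨hne, h⟩ := hxy
    rcases h with h | h
    · have h' : (P x).getVert 1 = y := h
      have hx : x ≠ ρ := by
        rintro rfl
        rw [hpρ] at h'
        exact hne h'
      exact h' ▸ hadj x hx
    · have h' : (P y).getVert 1 = x := h
      have hy : y ≠ ρ := by
        rintro rfl
        rw [hpρ] at h'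
        exact hne h'.symm
      exact (h' ▸ hadj y hy).symm
  apply le_antisymm hle2
  intro x y hxy
  by_contra hnot
  have hbr : T.IsBridge s(x, y) :=
    (isAcyclic_iff_forall_adj_isBridge.1 hT.2) hxy
  have hnr := isBridge_iff.1 hbr
  apply hnr
  have hmono : PMGraph (fun v => (P v).getVert 1) ≤ T \ fromEdgeSet {s(x, y)} := by
    intro a b hab
    rw [sdiff_adj]
    refine ⟨hle2 hab, ?_⟩
    rw [fromEdgeSet_adj]
    rintro ⟨hmem, -⟩
    rw [Set.mem_singleton_iff, Sym2.eq_iff] at hmem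
    rcases hmem with ⟨rfl, rfl⟩ | ⟨rfl, rfl⟩
    · exact hnot hab
    · exact hnot hab.symm
  exact Reachable.mono hmono
    ((pmgraph_connected pm).preconnected x y)


open SimpleGraph in
theorem card_trees_eq_card_pm :
    Nat.card {H : SimpleGraph V // H ≤ CrossG side ∧ H.IsTree}
      = Nat.card {p : V → V // IsPM side ρ Finset.univ p} := by
  symm
  apply Nat.card_eq_of_bijective
    (fun x => ⟨PMGraph x.1, pmgraph_le x.2, pmgraph_connected x.2, pmgraph_acyclic x.2⟩)
  constructor
  · rintro ⟨a, ha⟩ ⟨b, hb⟩ h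
    exact Subtype.ext (pmgraph_inj ha hb (congrArg Subtype.val h))
  · rintro ⟨T, hle, hT⟩
    obtain ⟨p, pm, hPT⟩ := pmgraph_surj hle hT ρ
    exact ⟨⟨p, pm⟩, Subtype.ext hPT⟩

end Bridge

end BipTree

theorem card_spanning_trees_bipartite (r s : ℕ) (hr : 1 ≤ r) (hs : 1 ≤ s) :
    Nat.card {H : SimpleGraph (Fin r ⊕ Fin s) //
        H ≤ completeBipartite r s ∧ H.IsTree} = r ^ (s - 1) * s ^ (r - 1) := by
  classical
  letI : LinearOrder (Fin r ⊕ Fin s) :=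
    LinearOrder.lift' (fun v => (finSumFinEquiv v : Fin (r + s))) finSumFinEquiv.injective
  have h0 : (0 : ℕ) < r := hr
  set ρ : Fin r ⊕ Fin s := Sum.inl ⟨0, h0⟩ with hρdef
  have hCB : completeBipartite r s = BipTree.CrossG Sum.isLeft := by
    ext x y
    rw [completeBipartite, SimpleGraph.fromRel_adj, BipTree.crossG_adj]
    constructor
    · rintro ⟨h1, h2 | h2⟩
      · exact ⟨h1, h2⟩
      · exact ⟨h1, h2.symm⟩
    · rintro ⟨h1, h2⟩
      exact ⟨h1, Or.inl h2⟩
  have hacnt : BipTree.acnt Sum.isLeft ρ Finset.univ = r := by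
    unfold BipTree.acnt
    have heq : Finset.univ.filter (fun v : Fin r ⊕ Fin s => Sum.isLeft v = Sum.isLeft ρ)
        = Finset.univ.map ⟨Sum.inl, Sum.inl_injective⟩ := by
      ext x
      cases x <;> simp [hρdef]
    rw [heq, Finset.card_map]
    simp
  have hbcnt : BipTree.bcnt Sum.isLeft ρ Finset.univ = s := by
    unfold BipTree.bcnt
    have heq : Finset.univ.filter (fun v : Fin r ⊕ Fin s => Sum.isLeft v ≠ Sum.isLeft ρ)
        = Finset.univ.map ⟨Sum.inr, Sum.inr_injective⟩ := by
      ext x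
      cases x <;> simp [hρdef]
    rw [heq, Finset.card_map]
    simp
  rw [hCB]
  rw [BipTree.card_trees_eq_card_pm (side := Sum.isLeft) (ρ := ρ)]
  rw [BipTree.card_pm_eq_card_code Finset.univ (Finset.mem_univ ρ)]
  rw [BipTree.card_code Finset.univ (Finset.mem_univ ρ) (by rw [hbcnt]; exact hs)]
  rw [hacnt, hbcnt]
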